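/- For every t ∈ ℂ with Re(t) ≥ 0, the image φ_t(𝔻) = {φ_t(z) : z ∈ 𝔻} equals 𝔻 if and only if Re(t) = 0; that is, φ_t is an automorphism of 𝔻 precisely when t is purely imaginary. -/

import Mathlib

/-- The parabolic-type linear-fractional map `φ_t(z) = ((2-t)z + t)/(-tz + 2 + t)`. -/
noncomputable def phiPara (t z : ℂ) : ℂ := ((2 - t) * z + t) / (-t * z + 2 + t)

lemma phiPara_normSq_lt {t z : ℂ} (ht : 0 ≤ t.re) (hz : ‖z‖ < 1) :
    Complex.normSq ((2 - t) * z + t) < Complex.normSq (-t * z + 2 + t) := by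
  have hz2 : Complex.normSq z < 1 := by
    rw [← Complex.sq_norm]; nlinarith [norm_nonneg z]
  simp only [Complex.normSq_apply] at hz2 ⊢
  simp only [Complex.add_re, Complex.add_im, Complex.mul_re, Complex.mul_im,
    Complex.sub_re, Complex.sub_im, Complex.neg_re, Complex.neg_im,
    Complex.re_ofNat, Complex.im_ofNat]
  nlinarith [sq_nonneg (z.re - 1), sq_nonneg z.im, mul_nonneg ht (sq_nonneg (z.re - 1)),
    mul_nonneg ht (sq_nonneg z.im)]

lemma phiPara_den_ne {t z : ℂ} (ht : 0 ≤ t.re) (hz : ‖z‖ < 1) :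
    -t * z + 2 + t ≠ 0 := by
  intro h0
  have := phiPara_normSq_lt ht hz (t := t)
  rw [h0] at this
  simp at this
  exact absurd this (not_lt.mpr (Complex.normSq_nonneg _))

lemma phiPara_maps {t z : ℂ} (ht : 0 ≤ t.re) (hz : ‖z‖ < 1) :
    ‖phiPara t z‖ < 1 := by
  have h := phiPara_normSq_lt ht hz (t := t)
  have hden := phiPara_den_ne ht hz (t := t)
  have hdpos : 0 < ‖-t * z + 2 + t‖ := by
    exact norm_pos_iff.mpr hden
  rw [phiPara, norm_div, div_lt_one hdpos]
  have h1 : ‖(2 - t) * z + t‖ ^ 2 < ‖-t * z + 2 + t‖ ^ 2 := by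
    rwa [Complex.sq_norm, Complex.sq_norm]
  nlinarith [norm_nonneg ((2 - t) * z + t)]

theorem phiPara_image_eq_disk_iff (t : ℂ) (ht : 0 ≤ t.re) :
    {w : ℂ | ∃ z : ℂ, ‖z‖ < 1 ∧ w = phiPara t z} =
      {w : ℂ | ‖w‖ < 1} ↔ t.re = 0 := by
  constructor
  · intro h
    by_contra hne
    have ha : 0 < t.re := lt_of_le_of_ne ht (Ne.symm hne)
    obtain ⟨x0, hx0gt, hx0lt, hkey⟩ :
        ∃ x0 : ℝ, -1 < x0 ∧ x0 < 1 ∧ 1 + x0 < t.re * (1 - x0) := by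
      refine ⟨(t.re - 2) / (t.re + 2), ?_, ?_, ?_⟩
      · rw [lt_div_iff₀ (by linarith)]; linarith
      · rw [div_lt_one (by linarith)]; linarith
      · have hap : (0:ℝ) < t.re + 2 := by linarith
        rw [← mul_lt_mul_iff_of_pos_right hap]
        have h1 : (1 + (t.re - 2) / (t.re + 2)) * (t.re + 2) = 2 * t.re := by
          field_simp; ring
        have h2 : t.re * (1 - (t.re - 2) / (t.re + 2)) * (t.re + 2) = 4 * t.re := by
          field_simp; ring
        rw [h1, h2]; nlinarith
    have hw0 : ‖(x0 : ℂ)‖ < 1 := by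
      rw [Complex.norm_real, Real.norm_eq_abs, abs_lt]; exact ⟨hx0gt, hx0lt⟩
    have hmem : (x0 : ℂ) ∈ {w : ℂ | ∃ z : ℂ, ‖z‖ < 1 ∧ w = phiPara t z} := by
      rw [h]; exact hw0
    obtain ⟨z, hz, hzeq⟩ := hmem
    have hden := phiPara_den_ne ht hz (t := t)
    have heq : (x0 : ℂ) * (-t * z + 2 + t) = (2 - t) * z + t := by
      rw [hzeq, phiPara, div_mul_cancel₀ _ hden]
    have heq2 : z * ((2 - t) + (x0 : ℂ) * t) = (x0 : ℂ) * (2 + t) - t := by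
      linear_combination -heq
    have hE : (2 - t) + (x0 : ℂ) * t ≠ 0 := by
      intro hE0
      rw [hE0, mul_zero] at heq2
      have h1 : (x0 : ℂ) * t = t - 2 := by linear_combination hE0
      have h2 : (x0 : ℂ) * 2 = 2 := by linear_combination -heq2 - h1
      have : x0 = 1 := by
        have := congrArg Complex.re h2
        simp at this
        linarith
      linarith
    have hzE : Complex.normSq (z * ((2 - t) + (x0 : ℂ) * t)) <
        Complex.normSq ((2 - t) + (x0 : ℂ) * t) := by
      rw [Complex.normSq_mul]
      have hE2 : 0 < Complex.normSq ((2 - t) + (x0 : ℂ) * t) :=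
        Complex.normSq_pos.mpr hE
      have hz2 : Complex.normSq z < 1 := by
        rw [← Complex.sq_norm]; nlinarith [norm_nonneg z]
      nlinarith [Complex.normSq_nonneg z]
    rw [heq2] at hzE
    have : Complex.normSq ((2 - t) + (x0 : ℂ) * t) <
        Complex.normSq ((x0 : ℂ) * (2 + t) - t) := by
      simp only [Complex.normSq_apply, Complex.add_re, Complex.add_im, Complex.sub_re,
        Complex.sub_im, Complex.mul_re, Complex.mul_im, Complex.ofReal_re, Complex.ofReal_im,
        Complex.re_ofNat, Complex.im_ofNat]
      nlinarith [mul_pos (by linarith : (0:ℝ) < 1 - x0)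
        (by linarith : (0:ℝ) < t.re * (1 - x0) - (1 + x0))]
    linarith
  · intro h0
    ext w
    simp only [Set.mem_setOf_eq]
    constructor
    · rintro ⟨z, hz, rfl⟩
      exact phiPara_maps (by linarith) hz
    · intro hw
      refine ⟨phiPara (-t) w, phiPara_maps (by simp [h0]) hw, ?_⟩
      have hd1 : -(-t) * w + 2 + (-t) ≠ 0 := phiPara_den_ne (by simp [h0]) hw
      have hd1' : t * w + 2 - t ≠ 0 := by
        intro h; apply hd1; linear_combination h
      have e1 : -t * phiPara (-t) w + 2 + t = 4 / (t * w + 2 - t) := by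
        rw [phiPara]
        have : -(-t) * w + 2 + -t = t * w + 2 - t := by ring
        rw [this]
        field_simp
        ring
      have e2 : (2 - t) * phiPara (-t) w + t = 4 * w / (t * w + 2 - t) := by
        rw [phiPara]
        have : -(-t) * w + 2 + -t = t * w + 2 - t := by ring
        rw [this]
        field_simp
        ring
      rw [phiPara, e1, e2]
      rw [div_div_div_cancel_right₀]
      · rw [mul_comm, mul_div_assoc, div_self (by norm_num : (4:ℂ) ≠ 0), mul_one]
      · exact hd1'
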